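/- Let p > 0, C > 0, let f : ℝ^d → ℝ be convex and differentiable attaining its minimum f* at x*, and let h : ℝ^d → ℝ be convex and differentiable. Let X : (0, ∞) → ℝ^d be twice continuously differentiable and satisfy the Nesterov flow in the form d/dt ∇h(X_t + (t/p) Ẋ_t) = −C p t^{p−1} ∇f(X_t). Then the energy functional E_t = C t^p (f(X_t) − f*) + D_h(x*, X_t + (t/p) Ẋ_t) is nonincreasing in t; more precisely, Ė_t = C p t^{p−1} ( f(X_t) − f* + ⟨∇f(X_t), x* − X_t⟩ ) ≤ 0. -/

import Mathlib

open scoped RealInnerProductSpace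
open Real Set

noncomputable section

lemma grad_chain {d : ℕ} {f : EuclideanSpace ℝ (Fin d) → ℝ} (hf : Differentiable ℝ f)
    {X : ℝ → EuclideanSpace ℝ (Fin d)} {V : EuclideanSpace ℝ (Fin d)} {t : ℝ}
    (hX : HasDerivAt X V t) :
    HasDerivAt (fun s => f (X s)) ⟪gradient f (X t), V⟫ t := by
  have h1 := (hf (X t)).hasGradientAt.hasFDerivAt
  simpa [InnerProductSpace.toDual_apply_apply, Function.comp_def] using h1.comp_hasDerivAt t hX

lemma grad_ineq {d : ℕ} {f : EuclideanSpace ℝ (Fin d) → ℝ}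
    (hconv : ConvexOn ℝ Set.univ f) (hf : Differentiable ℝ f)
    (x y : EuclideanSpace ℝ (Fin d)) :
    ⟪gradient f x, y - x⟫ ≤ f y - f x := by
  set A : ℝ →ᵃ[ℝ] EuclideanSpace ℝ (Fin d) := AffineMap.lineMap x y with hA
  have hφconv : ConvexOn ℝ Set.univ (f ∘ A) := by
    simpa using hconv.comp_affineMap A
  have hcurve : HasDerivAt (fun s : ℝ => A s) (y - x) 0 := by
    have : HasDerivAt (fun s : ℝ => s • (y - x) + x) ((1 : ℝ) • (y - x)) 0 :=
      ((hasDerivAt_id (0 : ℝ)).smul_const (y - x)).add_const x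
    have heq : (fun s : ℝ => A s) = (fun s : ℝ => s • (y - x) + x) := by
      funext s
      simp only [hA, AffineMap.lineMap_apply_module]
      module
    rw [heq]
    simpa using this
  have hd : HasDerivAt (f ∘ A) ⟪gradient f (A 0), y - x⟫ 0 := grad_chain hf hcurve
  have hs := hφconv.le_slope_of_hasDerivAt (mem_univ (0 : ℝ)) (mem_univ (1 : ℝ)) one_pos hd
  simpa [slope_def_field, hA] using hs

/-- Bregman divergence `D_h(y, x) = h(y) − h(x) − ⟨∇h(x), y − x⟩`. -/
def breg (d : ℕ) (h : EuclideanSpace ℝ (Fin d) → ℝ)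
    (y x : EuclideanSpace ℝ (Fin d)) : ℝ :=
  h y - h x - ⟪gradient h x, y - x⟫

theorem nesterov_flow_energy_decreasing
    (d : ℕ) (p C : ℝ) (hp : 0 < p) (hC : 0 < C)
    (f h : EuclideanSpace ℝ (Fin d) → ℝ)
    (hconv : ConvexOn ℝ Set.univ f) (hf : Differentiable ℝ f)
    (hhconv : ConvexOn ℝ Set.univ h) (hh : Differentiable ℝ h)
    (xstar : EuclideanSpace ℝ (Fin d)) (hmin : ∀ x, f xstar ≤ f x)
    (X X' X'' : ℝ → EuclideanSpace ℝ (Fin d))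
    (hX : ∀ t ∈ Set.Ioi (0 : ℝ), HasDerivAt X (X' t) t)
    (hX' : ∀ t ∈ Set.Ioi (0 : ℝ), HasDerivAt X' (X'' t) t)
    (hX'cont : ContinuousOn X'' (Set.Ioi 0))
    (hflow : ∀ t ∈ Set.Ioi (0 : ℝ),
      HasDerivAt (fun s => gradient h (X s + (s / p) • X' s))
        (-(C * p * t ^ (p - 1)) • gradient f (X t)) t) :
    AntitoneOn
      (fun t : ℝ => C * t ^ p * (f (X t) - f xstar) + breg d h xstar (X t + (t / p) • X' t))
      (Set.Ioi 0) ∧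
    ∀ t ∈ Set.Ioi (0 : ℝ),
      HasDerivAt
        (fun t : ℝ => C * t ^ p * (f (X t) - f xstar) + breg d h xstar (X t + (t / p) • X' t))
        (C * p * t ^ (p - 1) * (f (X t) - f xstar + ⟪gradient f (X t), xstar - X t⟫)) t ∧
      C * p * t ^ (p - 1) * (f (X t) - f xstar + ⟪gradient f (X t), xstar - X t⟫) ≤ 0 := by
  set E : ℝ → ℝ := fun t : ℝ =>
    C * t ^ p * (f (X t) - f xstar) + breg d h xstar (X t + (t / p) • X' t) with hE
  set E' : ℝ → ℝ := fun t : ℝ =>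
    C * p * t ^ (p - 1) * (f (X t) - f xstar + ⟪gradient f (X t), xstar - X t⟫) with hE'
  have key : ∀ t ∈ Set.Ioi (0 : ℝ), HasDerivAt E (E' t) t := by
    intro t ht
    have ht0 : (0 : ℝ) < t := ht
    set Z : ℝ → EuclideanSpace ℝ (Fin d) := fun s => X s + (s / p) • X' s with hZ
    set V : EuclideanSpace ℝ (Fin d) :=
      X' t + ((t / p) • X'' t + (1 / p) • X' t) with hV
    have hZt : HasDerivAt Z V t := by
      have hc : HasDerivAt (fun s : ℝ => s / p) (1 / p) t := by
        simpa using (hasDerivAt_id t).div_const p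
      exact (hX t ht).add (hc.smul (hX' t ht))
    -- first summand
    have hfX : HasDerivAt (fun s => f (X s)) ⟪gradient f (X t), X' t⟫ t :=
      grad_chain hf (hX t ht)
    have hpow : HasDerivAt (fun s : ℝ => C * s ^ p) (C * (p * t ^ (p - 1))) t :=
      (Real.hasDerivAt_rpow_const (Or.inl ht0.ne')).const_mul C
    have h1 : HasDerivAt (fun s : ℝ => C * s ^ p * (f (X s) - f xstar))
        (C * (p * t ^ (p - 1)) * (f (X t) - f xstar)
          + C * t ^ p * ⟪gradient f (X t), X' t⟫) t :=
      hpow.mul (hfX.sub_const (f xstar))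
    -- second summand
    have hhZ : HasDerivAt (fun s => h (Z s)) ⟪gradient h (Z t), V⟫ t :=
      grad_chain hh hZt
    have hg : HasDerivAt (fun s => gradient h (Z s))
        (-(C * p * t ^ (p - 1)) • gradient f (X t)) t := hflow t ht
    have hsub : HasDerivAt (fun s => xstar - Z s) (0 - V) t :=
      (hasDerivAt_const t xstar).sub hZt
    have hinner : HasDerivAt (fun s => ⟪gradient h (Z s), xstar - Z s⟫)
        (⟪gradient h (Z t), 0 - V⟫
          + ⟪-(C * p * t ^ (p - 1)) • gradient f (X t), xstar - Z t⟫) t :=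
      HasDerivAt.inner ℝ hg hsub
    have h2 : HasDerivAt (fun s => breg d h xstar (Z s))
        (0 - ⟪gradient h (Z t), V⟫
          - (⟪gradient h (Z t), 0 - V⟫
            + ⟪-(C * p * t ^ (p - 1)) • gradient f (X t), xstar - Z t⟫)) t := by
      have := ((hasDerivAt_const t (h xstar)).sub hhZ).sub hinner
      simpa [breg, Pi.sub_def] using this
    have htot := h1.add h2
    have hrp : t ^ p = t ^ (p - 1) * t := by
      rw [← Real.rpow_add_one ht0.ne' (p - 1), sub_add_cancel]
    have heqd : C * (p * t ^ (p - 1)) * (f (X t) - f xstar)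
          + C * t ^ p * ⟪gradient f (X t), X' t⟫
          + (0 - ⟪gradient h (Z t), V⟫
          - (⟪gradient h (Z t), 0 - V⟫
            + ⟪-(C * p * t ^ (p - 1)) • gradient f (X t), xstar - Z t⟫)) = E' t := by
      simp only [hE', hZ, inner_sub_right, inner_add_right, inner_zero_left, zero_sub,
        inner_neg_right, real_inner_smul_left, real_inner_smul_right, neg_mul, neg_neg]
      rw [hrp]
      field_simp
      ring
    rw [heqd] at htot
    exact htot
  have hnonpos : ∀ t ∈ Set.Ioi (0 : ℝ), E' t ≤ 0 := by
    intro t ht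
    have hb : f (X t) - f xstar + ⟪gradient f (X t), xstar - X t⟫ ≤ 0 := by
      have := grad_ineq hconv hf (X t) xstar
      linarith
    have ht0 : (0 : ℝ) < t := ht
    have hc : 0 ≤ C * p * t ^ (p - 1) := by positivity
    exact mul_nonpos_of_nonneg_of_nonpos hc hb
  constructor
  · have := antitoneOn_of_deriv_nonpos (convex_Ioi (0 : ℝ))
      (fun t ht => (key t ht).continuousAt.continuousWithinAt)
      (fun t ht => by
        rw [interior_Ioi] at ht
        exact (key t ht).differentiableAt.differentiableWithinAt)
      (fun t ht => by
        rw [interior_Ioi] at ht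
        rw [(key t ht).deriv]
        exact hnonpos t ht)
    exact this
  · exact fun t ht => ⟨key t ht, hnonpos t ht⟩
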